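/- Fix η ∈ (0,1/2) and set r_N := 1 − N^{−(1/2+η)}. For all s = t ∈ (0,∞) and all x, y ∈ ℝ² with x ≠ y, lim_{N→∞} ∫_{Ns·r_N}^{Ns} ∏_{j=1,2} P( V(M_j·r/(Ns)) = V'(M_j'·r/(Ns)) ) dr = 0, where M_j := M_N(x_j,s), M_j' := M_N(y_j,s), and the limit is taken along integers N ≥ 16 large enough that M_j ≥ 0 and M_j' ≥ 0 for j = 1,2. -/

import Mathlib

open MeasureTheory Filter Set

noncomputable section

/-- Binomial probability mass at integer index `j`, parameters `(m, p)`: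
`C(m,j) p^j (1-p)^(m-j)`, interpreted as `0` unless `0 ≤ j ≤ m`. -/
def binPMF (m : ℕ) (p : ℝ) (j : ℤ) : ℝ :=
  if 0 ≤ j then (m.choose j.toNat : ℝ) * p ^ j.toNat * (1 - p) ^ (m - j.toNat) else 0

/-- `P(S_m(p) = S'_{m'}(p') + n)` for independent binomial random variables
`S_m(p)` and `S'_{m'}(p')`. -/
def PSS (m m' : ℕ) (p p' : ℝ) (n : ℤ) : ℝ :=
  ∑ k ∈ Finset.range (m' + 1), binPMF m' p' (k : ℤ) * binPMF m p ((k : ℤ) + n)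

/-- Poisson probability mass function with mean `l`. -/
def poisPMF (l : ℝ) (k : ℕ) : ℝ := Real.exp (-l) * l ^ k / (Nat.factorial k)

/-- `P(V(l) = V'(l') + n)` for independent Poisson random variables with
means `l` and `l'`. -/
def PVV (l l' : ℝ) (n : ℤ) : ℝ :=
  ∑' k : ℕ, if 0 ≤ (k : ℤ) + n then poisPMF l' k * poisPMF l ((k : ℤ) + n).toNat else 0

/-- Centered Gaussian density with variance `v`, evaluated at `x`. -/
def gaussD (v x : ℝ) : ℝ := (Real.sqrt (2 * Real.pi * v))⁻¹ * Real.exp (-x ^ 2 / (2 * v))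

/-- Euclidean distance of two points of `ℝ × ℝ` (viewed as `ℝ²`). -/
def enorm2 (a b : ℝ × ℝ) : ℝ := Real.sqrt ((a.1 - b.1) ^ 2 + (a.2 - b.2) ^ 2)

/-- Two-dimensional heat kernel `Q_t(a,b)`. -/
def heatK (t : ℝ) (a b : ℝ × ℝ) : ℝ :=
  (2 * Real.pi * t)⁻¹ * Real.exp (-((a.1 - b.1) ^ 2 + (a.2 - b.2) ^ 2) / (2 * t))

/-- `M_N(u,r) = ⌊N r + N r · u / N^{1/2}⌋`. -/
def Mfl (N : ℕ) (u r : ℝ) : ℤ := ⌊(N : ℝ) * r + (N : ℝ) * r * (u / Real.sqrt N)⌋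

/-- `𝔟^N(x,y;r,s,t) = ∏_{j=1,2} P(S_{M_j}(r/(Ns)) = S'_{M_j'}(r/(Nt)))`. -/
def bUpper (N : ℕ) (x y : ℝ × ℝ) (r s t : ℝ) : ℝ :=
  PSS (Mfl N x.1 s).toNat (Mfl N y.1 t).toNat (r / ((N : ℝ) * s)) (r / ((N : ℝ) * t)) 0 *
  PSS (Mfl N x.2 s).toNat (Mfl N y.2 t).toNat (r / ((N : ℝ) * s)) (r / ((N : ℝ) * t)) 0

/-- `𝔟_N(x,y;r,s,t) = ∏_{j=1,2} N^{1/2} P(S_{M_j}(r/s) = S'_{M_j'}(r/t))`. -/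
def bLower (N : ℕ) (x y : ℝ × ℝ) (r s t : ℝ) : ℝ :=
  (Real.sqrt N * PSS (Mfl N x.1 s).toNat (Mfl N y.1 t).toNat (r / s) (r / t) 0) *
  (Real.sqrt N * PSS (Mfl N x.2 s).toNat (Mfl N y.2 t).toNat (r / s) (r / t) 0)

/-- The primary condition over `[T₀, T₁]` (with parameter `η ∈ (0,1/2)`). -/
def primaryCond (η T0 T1 : ℝ) (x y : ℝ × ℝ) (s t : ℝ) (N : ℕ) : Prop :=
  |x.1| ≤ (N : ℝ) ^ η / 2 ∧ |x.2| ≤ (N : ℝ) ^ η / 2 ∧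
  |y.1| ≤ (N : ℝ) ^ η / 2 ∧ |y.2| ≤ (N : ℝ) ^ η / 2 ∧
  T0 ≤ s ∧ s ≤ t ∧ t ≤ T1 ∧ 16 ≤ N ∧
  1 ≤ ⌊T0 * (N : ℝ) ^ ((1 : ℝ) / 2 - η) / 2⌋

/-- Indicator of `[1, ∞)`. -/
def ind1 (r : ℝ) : ℝ := if 1 ≤ r then 1 else 0

lemma pois_nonneg {l : ℝ} (hl : 0 ≤ l) (k : ℕ) : 0 ≤ poisPMF l k := by
  unfold poisPMF
  positivity

lemma pois_le_one {l : ℝ} (hl : 0 ≤ l) (k : ℕ) : poisPMF l k ≤ 1 := by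
  unfold poisPMF
  rw [mul_div_assoc]
  calc Real.exp (-l) * (l ^ k / (Nat.factorial k)) ≤ Real.exp (-l) * Real.exp l := by
        exact mul_le_mul_of_nonneg_left (Real.pow_div_factorial_le_exp (x := l) hl k)
          (Real.exp_nonneg _)
    _ = 1 := by rw [← Real.exp_add]; simp

lemma fact_lb (k : ℕ) (hk : 1 ≤ k) :
    Real.sqrt (2 * Real.pi * k) * ((k : ℝ) / Real.exp 1) ^ k ≤ (Nat.factorial k : ℝ) := by
  obtain ⟨m, rfl⟩ := Nat.exists_eq_add_of_le hk
  have htend : Tendsto (Stirling.stirlingSeq ∘ Nat.succ) atTop (nhds (Real.sqrt Real.pi)) :=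
    Stirling.tendsto_stirlingSeq_sqrt_pi.comp (tendsto_add_atTop_nat 1)
  have h1 : Real.sqrt Real.pi ≤ Stirling.stirlingSeq (m + 1) :=
    Stirling.stirlingSeq'_antitone.le_of_tendsto htend m
  set k := 1 + m with hk'
  have hkm : k = m + 1 := by omega
  rw [hkm]
  have hden : 0 < Real.sqrt (2 * (m + 1 : ℕ)) * (((m + 1 : ℕ) : ℝ) / Real.exp 1) ^ (m + 1) := by
    apply mul_pos
    · apply Real.sqrt_pos.2; positivity
    · positivity
  have h2 : Real.sqrt Real.pi * (Real.sqrt (2 * (m + 1 : ℕ)) *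
      (((m + 1 : ℕ) : ℝ) / Real.exp 1) ^ (m + 1)) ≤ (Nat.factorial (m + 1) : ℝ) := by
    have := h1
    rw [Stirling.stirlingSeq, le_div_iff₀ hden] at this
    linarith
  calc Real.sqrt (2 * Real.pi * (m + 1 : ℕ)) * (((m + 1 : ℕ) : ℝ) / Real.exp 1) ^ (m + 1)
      = Real.sqrt Real.pi * (Real.sqrt (2 * (m + 1 : ℕ)) *
        (((m + 1 : ℕ) : ℝ) / Real.exp 1) ^ (m + 1)) := by
        rw [show 2 * Real.pi * ((m + 1 : ℕ) : ℝ) = Real.pi * (2 * ((m + 1 : ℕ) : ℝ)) by ring,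
          Real.sqrt_mul Real.pi_pos.le, mul_assoc]
    _ ≤ _ := h2

lemma pois_le_invsqrt {l : ℝ} (hl : 0 ≤ l) {k : ℕ} (hk : 1 ≤ k) :
    poisPMF l k ≤ (Real.sqrt (2 * Real.pi * k))⁻¹ := by
  rcases eq_or_lt_of_le hl with h0 | hl
  · unfold poisPMF
    rw [← h0, zero_pow (by omega)]
    simp
    positivity
  have hkpos : (0:ℝ) < k := by exact_mod_cast hk
  have hS : (0:ℝ) < Real.sqrt (2 * Real.pi * k) := Real.sqrt_pos.2 (by positivity)
  have hpow : (0:ℝ) < ((k:ℝ) / Real.exp 1) ^ k := by positivity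
  have h1 : poisPMF l k ≤ Real.exp (-l) * l ^ k /
      (Real.sqrt (2 * Real.pi * k) * ((k : ℝ) / Real.exp 1) ^ k) := by
    unfold poisPMF
    apply div_le_div_of_nonneg_left (by positivity) (by positivity) (fact_lb k hk)
  have key : Real.exp (-l) * (Real.exp 1 * l / k) ^ k ≤ 1 := by
    have h2 : Real.exp 1 * l / k = Real.exp 1 * (l / k) := by ring
    have h3 : Real.exp 1 * (l / k) ≤ Real.exp (l / k) := by
      have := Real.add_one_le_exp (l / k - 1)
      calc Real.exp 1 * (l / k) = Real.exp 1 * ((l / k - 1) + 1) := by ring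
        _ ≤ Real.exp 1 * Real.exp (l / k - 1) := by
            apply mul_le_mul_of_nonneg_left (by linarith) (Real.exp_nonneg _)
        _ = Real.exp (l / k) := by rw [← Real.exp_add]; ring_nf
    calc Real.exp (-l) * (Real.exp 1 * l / k) ^ k
        ≤ Real.exp (-l) * (Real.exp (l / k)) ^ k := by
          apply mul_le_mul_of_nonneg_left _ (Real.exp_nonneg _)
          apply pow_le_pow_left₀ (by positivity) (by rw [h2]; exact h3)
      _ = Real.exp (-l) * Real.exp l := by
          rw [← Real.exp_nat_mul]
          congr 1
          field_simp
      _ = 1 := by rw [← Real.exp_add]; simp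
  calc poisPMF l k ≤ Real.exp (-l) * l ^ k /
      (Real.sqrt (2 * Real.pi * k) * ((k : ℝ) / Real.exp 1) ^ k) := h1
    _ = (Real.sqrt (2 * Real.pi * k))⁻¹ * (Real.exp (-l) * (Real.exp 1 * l / k) ^ k) := by
        rw [div_pow, div_pow, mul_pow]
        field_simp
    _ ≤ (Real.sqrt (2 * Real.pi * k))⁻¹ * 1 := by
        apply mul_le_mul_of_nonneg_left key (by positivity)
    _ = _ := mul_one _

lemma pois_small {l : ℝ} {k : ℕ} (hl : 0 ≤ l) (hk9 : (k : ℝ) ≤ l / 9) :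
    poisPMF l k ≤ Real.exp (-l / 3) := by
  rcases Nat.eq_zero_or_pos k with rfl | hk
  · have h0 : poisPMF l 0 = Real.exp (-l) := by unfold poisPMF; norm_num
    rw [h0]
    exact Real.exp_le_exp.2 (by linarith)
  have hkpos : (0:ℝ) < k := by exact_mod_cast hk
  have hlpos : (0:ℝ) < l := by nlinarith
  have hfact : ((k:ℝ) / Real.exp 1) ^ k ≤ (Nat.factorial k : ℝ) := by
    have h := Real.pow_div_factorial_le_exp (x := (k:ℝ)) (by positivity) k
    rw [div_le_iff₀ (by positivity)] at h
    rw [div_pow, div_le_iff₀ (by positivity)]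
    calc (k:ℝ) ^ k = (k:ℝ) ^ k := rfl
      _ ≤ Real.exp k * (Nat.factorial k : ℝ) := by nlinarith [h]
      _ = (Nat.factorial k : ℝ) * (Real.exp 1) ^ k := by
          rw [← Real.exp_nat_mul]; ring_nf
  have h1 : poisPMF l k ≤ Real.exp (-l) * (Real.exp 1 * l / k) ^ k := by
    unfold poisPMF
    rw [mul_div_assoc]
    apply mul_le_mul_of_nonneg_left _ (Real.exp_nonneg _)
    rw [div_le_iff₀ (by positivity)]
    calc l ^ k = ((k:ℝ) / Real.exp 1) ^ k * (Real.exp 1 * l / k) ^ k := by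
          rw [← mul_pow]; congr 1; field_simp
      _ ≤ (Nat.factorial k : ℝ) * (Real.exp 1 * l / k) ^ k := by
          apply mul_le_mul_of_nonneg_right hfact (by positivity)
      _ = (Real.exp 1 * l / k) ^ k * (Nat.factorial k : ℝ) := by ring
  have hlog : (k : ℝ) * Real.log (Real.exp 1 * l / k) ≤ 2 / 3 * l := by
    have hsq : Real.log (l / k) ≤ 2 * (Real.sqrt (l / k) - 1) := by
      have h := Real.log_le_sub_one_of_pos (x := Real.sqrt (l / k)) (Real.sqrt_pos.2 (by positivity))
      calc Real.log (l / k) = 2 * Real.log (Real.sqrt (l / k)) := by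
            rw [Real.log_sqrt (by positivity : (0:ℝ) ≤ l / k)]
            ring
        _ ≤ 2 * (Real.sqrt (l / k) - 1) := by linarith
    have hlogsplit : Real.log (Real.exp 1 * l / k) = 1 + Real.log (l / k) := by
      rw [mul_div_assoc, Real.log_mul (Real.exp_ne_zero 1) (by positivity), Real.log_exp]
    have hksqrt : (k:ℝ) * Real.sqrt (l / k) = Real.sqrt ((k:ℝ) * l) := by
      rw [show (k:ℝ) * l = (k:ℝ)^2 * (l / k) by field_simp, Real.sqrt_mul (by positivity),
        Real.sqrt_sq hkpos.le]
    have hkl : Real.sqrt ((k:ℝ) * l) ≤ l / 3 := by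
      rw [show l / 3 = Real.sqrt ((l/3)^2) by rw [Real.sqrt_sq (by positivity)]]
      apply Real.sqrt_le_sqrt
      nlinarith
    calc (k:ℝ) * Real.log (Real.exp 1 * l / k)
        = (k:ℝ) + (k:ℝ) * Real.log (l / k) := by rw [hlogsplit]; ring
      _ ≤ (k:ℝ) + (k:ℝ) * (2 * (Real.sqrt (l / k) - 1)) := by nlinarith
      _ = 2 * ((k:ℝ) * Real.sqrt (l / k)) - (k:ℝ) := by ring
      _ ≤ 2 * (l / 3) := by rw [hksqrt]; nlinarith [hkl]
      _ = 2 / 3 * l := by ring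
  have h2 : (Real.exp 1 * l / k) ^ k ≤ Real.exp (2 / 3 * l) := by
    have hb : (0:ℝ) < Real.exp 1 * l / k := by positivity
    calc (Real.exp 1 * l / k) ^ k = Real.exp ((k:ℝ) * Real.log (Real.exp 1 * l / k)) := by
          rw [Real.exp_nat_mul, Real.exp_log hb]
      _ ≤ Real.exp (2 / 3 * l) := Real.exp_le_exp.2 hlog
  calc poisPMF l k ≤ Real.exp (-l) * (Real.exp 1 * l / k) ^ k := h1
    _ ≤ Real.exp (-l) * Real.exp (2 / 3 * l) := by
        apply mul_le_mul_of_nonneg_left h2 (Real.exp_nonneg _)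
    _ = Real.exp (-l / 3) := by rw [← Real.exp_add]; ring_nf

lemma summable_pois {l : ℝ} : Summable (poisPMF l) := by
  have := (Real.summable_pow_div_factorial l).mul_left (Real.exp (-l))
  apply this.congr
  intro k
  rw [poisPMF, mul_div_assoc]

lemma tsum_pois {l : ℝ} : ∑' k, poisPMF l k = 1 := by
  have h : ∑' k, poisPMF l k = Real.exp (-l) * ∑' k : ℕ, l ^ k / (Nat.factorial k) := by
    rw [← tsum_mul_left]
    apply tsum_congr
    intro k
    rw [poisPMF, mul_div_assoc]
  rw [h, show (∑' k : ℕ, l ^ k / (Nat.factorial k)) = Real.exp l by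
    rw [Real.exp_eq_exp_ℝ, NormedSpace.exp_eq_tsum_div]]
  rw [← Real.exp_add]; simp

lemma PVV_zero_eq (l l' : ℝ) : PVV l l' 0 = ∑' k : ℕ, poisPMF l' k * poisPMF l k := by
  unfold PVV
  apply tsum_congr
  intro k
  simp

lemma summable_PVV {l l' : ℝ} (hl : 0 ≤ l) (hl' : 0 ≤ l') :
    Summable (fun k : ℕ => poisPMF l' k * poisPMF l k) := by
  apply Summable.of_nonneg_of_le (fun k => mul_nonneg (pois_nonneg hl' k) (pois_nonneg hl k))
    (fun k => ?_) (summable_pois (l := l'))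
  calc poisPMF l' k * poisPMF l k ≤ poisPMF l' k * 1 :=
      mul_le_mul_of_nonneg_left (pois_le_one hl k) (pois_nonneg hl' k)
    _ = poisPMF l' k := mul_one _

lemma PVV_nonneg {l l' : ℝ} (hl : 0 ≤ l) (hl' : 0 ≤ l') : 0 ≤ PVV l l' 0 := by
  rw [PVV_zero_eq]
  exact tsum_nonneg fun k => mul_nonneg (pois_nonneg hl' k) (pois_nonneg hl k)

lemma PVV_le_one {l l' : ℝ} (hl : 0 ≤ l) (hl' : 0 ≤ l') : PVV l l' 0 ≤ 1 := by
  rw [PVV_zero_eq]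
  calc
    (∑' k : ℕ, poisPMF l' k * poisPMF l k) ≤ ∑' k : ℕ, poisPMF l' k := by
        apply Summable.tsum_le_tsum _ (summable_PVV hl hl') (summable_pois)
        intro k
        calc poisPMF l' k * poisPMF l k ≤ poisPMF l' k * 1 :=
            mul_le_mul_of_nonneg_left (pois_le_one hl k) (pois_nonneg hl' k)
          _ = poisPMF l' k := mul_one _
    _ = 1 := tsum_pois

lemma PVV_bound {l l' : ℝ} (hl : 0 ≤ l) (hl' : 0 ≤ l') (K : ℕ) (hK1 : 1 ≤ K)
    (hK : (K : ℝ) ≤ l' / 9) :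
    PVV l l' 0 ≤ K * Real.exp (-l' / 3) + (Real.sqrt (2 * Real.pi * K))⁻¹ := by
  rw [PVV_zero_eq]
  set f := fun k : ℕ => poisPMF l' k * poisPMF l k with hf
  have hsum : Summable f := summable_PVV hl hl'
  rw [← hsum.sum_add_tsum_nat_add K]
  have hSpos : (0:ℝ) < Real.sqrt (2 * Real.pi * K) :=
    Real.sqrt_pos.2 (by positivity)
  gcongr
  · -- head sum
    calc
      (∑ k ∈ Finset.range K, f k) ≤ ∑ k ∈ Finset.range K, Real.exp (-l' / 3) := by
        apply Finset.sum_le_sum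
        intro k hk
        have hk' : (k : ℝ) ≤ l' / 9 := by
          have : (k : ℝ) ≤ (K : ℝ) := by exact_mod_cast (Finset.mem_range.1 hk).le
          linarith
        calc f k ≤ poisPMF l' k * 1 :=
            mul_le_mul_of_nonneg_left (pois_le_one hl k) (pois_nonneg hl' k)
          _ = poisPMF l' k := mul_one _
          _ ≤ Real.exp (-l' / 3) := pois_small hl' hk'
      _ = K * Real.exp (-l' / 3) := by
        rw [Finset.sum_const, Finset.card_range, nsmul_eq_mul]
  · -- tail sum
    have htail_summable : Summable (fun k : ℕ => f (k + K)) :=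
      (summable_nat_add_iff K).2 hsum
    have htail_pois : Summable (fun k : ℕ => poisPMF l' (k + K)) :=
      (summable_nat_add_iff K).2 (summable_pois)
    calc
      (∑' k : ℕ, f (k + K))
          ≤ ∑' k : ℕ, poisPMF l' (k + K) * (Real.sqrt (2 * Real.pi * K))⁻¹ := by
          apply Summable.tsum_le_tsum _ htail_summable (htail_pois.mul_right _)
          intro k
          apply mul_le_mul_of_nonneg_left _ (pois_nonneg hl' _)
          calc poisPMF l (k + K) ≤ (Real.sqrt (2 * Real.pi * ((k + K : ℕ) : ℝ)))⁻¹ :=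
              pois_le_invsqrt hl (by omega)
            _ ≤ (Real.sqrt (2 * Real.pi * K))⁻¹ := by
              apply inv_anti₀ hSpos
              apply Real.sqrt_le_sqrt
              have : (K:ℝ) ≤ ((k + K : ℕ) : ℝ) := by exact_mod_cast Nat.le_add_left K k
              nlinarith [Real.pi_pos]
      _ = (∑' k : ℕ, poisPMF l' (k + K)) * (Real.sqrt (2 * Real.pi * K))⁻¹ :=
          tsum_mul_right
      _ ≤ 1 * (Real.sqrt (2 * Real.pi * K))⁻¹ := by
          apply mul_le_mul_of_nonneg_right _ (by positivity)
          have hsplit := (summable_pois (l := l')).sum_add_tsum_nat_add K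
          have hhead : 0 ≤ ∑ k ∈ Finset.range K, poisPMF l' k :=
            Finset.sum_nonneg fun k _ => pois_nonneg hl' k
          have := tsum_pois (l := l')
          linarith [hsplit.symm ▸ this]
      _ = (Real.sqrt (2 * Real.pi * K))⁻¹ := one_mul _

lemma Mfl_lb {N : ℕ} {u s : ℝ} (hN : 0 < (N:ℝ)) (hs : 0 ≤ s) (hu : 2 * |u| ≤ Real.sqrt N) :
    (N:ℝ) * s / 2 - 1 ≤ ((Mfl N u s : ℤ) : ℝ) := by
  unfold Mfl
  have hsq : 0 < Real.sqrt N := Real.sqrt_pos.2 hN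
  have h1 : -(Real.sqrt N) / 2 ≤ u := by
    have := (abs_le.1 (by linarith : |u| ≤ Real.sqrt N / 2)).1
    linarith
  have h3 : -(1/2 : ℝ) ≤ u / Real.sqrt N := by
    rw [le_div_iff₀ hsq]
    linarith
  have h2 : (N:ℝ) * s / 2 ≤ (N:ℝ) * s + (N:ℝ) * s * (u / Real.sqrt N) := by
    nlinarith [mul_le_mul_of_nonneg_left h3 (mul_nonneg hN.le hs)]
  calc (N:ℝ) * s / 2 - 1 ≤ ((N:ℝ) * s + (N:ℝ) * s * (u / Real.sqrt N)) - 1 := by linarith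
    _ ≤ _ := (Int.sub_one_lt_floor _).le

set_option maxHeartbeats 2000000 in
theorem stmt8 (η : ℝ) (hη : 0 < η) (hη' : η < 1 / 2) (s : ℝ) (hs : 0 < s)
    (x y : ℝ × ℝ) (hxy : x ≠ y) :
    Tendsto
      (fun N : ℕ =>
        ∫ r in ((N : ℝ) * s * (1 - (N : ℝ) ^ (-(1 / 2 + η))))..((N : ℝ) * s),
          PVV (((Mfl N x.1 s : ℤ) : ℝ) * r / ((N : ℝ) * s))
              (((Mfl N y.1 s : ℤ) : ℝ) * r / ((N : ℝ) * s)) 0 *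
            PVV (((Mfl N x.2 s : ℤ) : ℝ) * r / ((N : ℝ) * s))
                (((Mfl N y.2 s : ℤ) : ℝ) * r / ((N : ℝ) * s)) 0)
      atTop (nhds 0) := by
  set c2 : ℝ := (Real.sqrt (2 * Real.pi * s / 160))⁻¹ * s with hc2
  have hh : Tendsto (fun N : ℕ => ((N:ℝ) * s) ^ 2 * Real.exp (-((N:ℝ) * s) / 24)
      + c2 * (N:ℝ) ^ (-η)) atTop (nhds 0) := by
    have t1 : Tendsto (fun N : ℕ => ((N:ℝ) * s) ^ 2 * Real.exp (-((N:ℝ) * s) / 24))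
        atTop (nhds 0) := by
      have base := Real.tendsto_pow_mul_exp_neg_atTop_nhds_zero 2
      have T : Tendsto (fun N : ℕ => (N:ℝ) * s / 24) atTop atTop := by
        have := tendsto_natCast_atTop_atTop (R := ℝ).atTop_mul_const
          (show (0:ℝ) < s / 24 by positivity)
        apply this.congr
        intro N; ring
      have comp := (base.comp T).const_mul (576 : ℝ)
      simp only [mul_zero] at comp
      apply comp.congr
      intro N
      simp only [Function.comp_apply]
      rw [show -((N:ℝ) * s) / 24 = -((N:ℝ) * s / 24) by ring]
      ring
    have t2 : Tendsto (fun N : ℕ => c2 * (N:ℝ) ^ (-η)) atTop (nhds 0) := by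
      have := ((tendsto_rpow_neg_atTop hη).comp
        (tendsto_natCast_atTop_atTop (R := ℝ))).const_mul c2
      simpa using this
    simpa using t1.add t2
  apply squeeze_zero_norm' _ hh
  have e1 : ∀ᶠ N : ℕ in atTop, (160:ℝ) / s ≤ (N:ℝ) :=
    tendsto_natCast_atTop_atTop.eventually_ge_atTop _
  have e2 : ∀ᶠ N : ℕ in atTop, (N:ℝ) ^ (-(1 / 2 + η)) ≤ 1 / 2 := by
    have := (tendsto_rpow_neg_atTop (show (0:ℝ) < 1 / 2 + η by linarith)).comp
      (tendsto_natCast_atTop_atTop (R := ℝ))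
    exact this.eventually (eventually_le_nhds (by norm_num))
  have e3 : ∀ᶠ N : ℕ in atTop,
      (2 * |x.1|) ^ 2 ≤ (N:ℝ) ∧ (2 * |x.2|) ^ 2 ≤ (N:ℝ) ∧
      (2 * |y.1|) ^ 2 ≤ (N:ℝ) ∧ (2 * |y.2|) ^ 2 ≤ (N:ℝ) := by
    have h := tendsto_natCast_atTop_atTop (R := ℝ)
    filter_upwards [h.eventually_ge_atTop ((2 * |x.1|) ^ 2),
      h.eventually_ge_atTop ((2 * |x.2|) ^ 2),
      h.eventually_ge_atTop ((2 * |y.1|) ^ 2),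
      h.eventually_ge_atTop ((2 * |y.2|) ^ 2)] with N h1 h2 h3 h4
    exact ⟨h1, h2, h3, h4⟩
  filter_upwards [e1, e2, e3] with N h1 h2 h3
  obtain ⟨hx1, hx2, hy1, hy2⟩ := h3
  have hN0 : (0:ℝ) < N := lt_of_lt_of_le (by positivity) h1
  have hNs : (160:ℝ) ≤ (N:ℝ) * s := by
    rw [div_le_iff₀ hs] at h1; linarith
  have hε0 : (0:ℝ) ≤ (N:ℝ) ^ (-(1 / 2 + η)) := Real.rpow_nonneg (Nat.cast_nonneg N) _
  have hsqrt : ∀ u : ℝ, (2 * |u|) ^ 2 ≤ (N:ℝ) → 2 * |u| ≤ Real.sqrt N := by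
    intro u hu
    rw [show (2 * |u| : ℝ) = Real.sqrt ((2 * |u|) ^ 2) by
      rw [Real.sqrt_sq (by positivity)]]
    exact Real.sqrt_le_sqrt hu
  have hMx1 := Mfl_lb hN0 hs.le (hsqrt _ hx1)
  have hMx2 := Mfl_lb hN0 hs.le (hsqrt _ hx2)
  have hMy1 := Mfl_lb hN0 hs.le (hsqrt _ hy1)
  have hMy2 := Mfl_lb hN0 hs.le (hsqrt _ hy2)
  have hMx10 : (0:ℝ) ≤ ((Mfl N x.1 s : ℤ) : ℝ) := by linarith
  have hMx20 : (0:ℝ) ≤ ((Mfl N x.2 s : ℤ) : ℝ) := by linarith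
  have hMy10 : (0:ℝ) ≤ ((Mfl N y.1 s : ℤ) : ℝ) := by linarith
  have hMy20 : (0:ℝ) ≤ ((Mfl N y.2 s : ℤ) : ℝ) := by linarith
  have hab : (N:ℝ) * s * (1 - (N:ℝ) ^ (-(1 / 2 + η))) ≤ (N:ℝ) * s := by nlinarith
  have hK1 : 1 ≤ ⌊(N:ℝ) * s / 80⌋₊ := Nat.le_floor (by push_cast; nlinarith)
  have hKle : ((⌊(N:ℝ) * s / 80⌋₊ : ℕ) : ℝ) ≤ (N:ℝ) * s / 80 := Nat.floor_le (by positivity)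
  have hKge : (N:ℝ) * s / 160 ≤ ((⌊(N:ℝ) * s / 80⌋₊ : ℕ) : ℝ) := by
    have := Nat.sub_one_lt_floor ((N:ℝ) * s / 80)
    have h160 : (N:ℝ) * s / 160 ≤ (N:ℝ) * s / 80 - 1 := by linarith
    linarith
  have key : ‖∫ r in ((N : ℝ) * s * (1 - (N : ℝ) ^ (-(1 / 2 + η))))..((N : ℝ) * s),
      PVV (((Mfl N x.1 s : ℤ) : ℝ) * r / ((N : ℝ) * s))
          (((Mfl N y.1 s : ℤ) : ℝ) * r / ((N : ℝ) * s)) 0 *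
        PVV (((Mfl N x.2 s : ℤ) : ℝ) * r / ((N : ℝ) * s))
            (((Mfl N y.2 s : ℤ) : ℝ) * r / ((N : ℝ) * s)) 0‖ ≤
      ((N:ℝ) * s / 80 * Real.exp (-((N:ℝ) * s) / 24) +
        (Real.sqrt (2 * Real.pi * ((N:ℝ) * s / 160)))⁻¹) *
      |((N:ℝ) * s) - ((N:ℝ) * s * (1 - (N:ℝ) ^ (-(1 / 2 + η))))| := by
    apply intervalIntegral.norm_integral_le_of_norm_le_const
    intro r hr
    rw [Set.uIoc_of_le hab] at hr
    have hra : (N:ℝ) * s * (1 - (N:ℝ) ^ (-(1 / 2 + η))) < r := hr.1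
    have hr2 : (N:ℝ) * s / 2 ≤ r := by nlinarith
    have hr0 : (0:ℝ) ≤ r := by linarith
    have hrdiv : (1/2 : ℝ) ≤ r / ((N:ℝ) * s) := by
      rw [le_div_iff₀ (by positivity)]
      linarith
    have hrdiv0 : (0:ℝ) ≤ r / ((N:ℝ) * s) := by linarith
    have hl11 : (0:ℝ) ≤ ((Mfl N x.1 s : ℤ) : ℝ) * r / ((N : ℝ) * s) := by positivity
    have hl12 : (0:ℝ) ≤ ((Mfl N y.1 s : ℤ) : ℝ) * r / ((N : ℝ) * s) := by positivity
    have hl21 : (0:ℝ) ≤ ((Mfl N x.2 s : ℤ) : ℝ) * r / ((N : ℝ) * s) := by positivity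
    have hl22 : (0:ℝ) ≤ ((Mfl N y.2 s : ℤ) : ℝ) * r / ((N : ℝ) * s) := by positivity
    have hl'8 : (N:ℝ) * s / 8 ≤ ((Mfl N y.1 s : ℤ) : ℝ) * r / ((N : ℝ) * s) := by
      have step : ((N:ℝ) * s / 2 - 1) * (1/2) ≤ ((Mfl N y.1 s : ℤ) : ℝ) * (r / ((N:ℝ) * s)) :=
        mul_le_mul hMy1 hrdiv (by norm_num) hMy10
      have heq : ((Mfl N y.1 s : ℤ) : ℝ) * r / ((N : ℝ) * s)
          = ((Mfl N y.1 s : ℤ) : ℝ) * (r / ((N:ℝ) * s)) := by ring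
      rw [heq]
      nlinarith
    have hK9 : ((⌊(N:ℝ) * s / 80⌋₊ : ℕ) : ℝ) ≤
        (((Mfl N y.1 s : ℤ) : ℝ) * r / ((N : ℝ) * s)) / 9 := by
      nlinarith
    have hP1 : PVV (((Mfl N x.1 s : ℤ) : ℝ) * r / ((N : ℝ) * s))
        (((Mfl N y.1 s : ℤ) : ℝ) * r / ((N : ℝ) * s)) 0 ≤
        (N:ℝ) * s / 80 * Real.exp (-((N:ℝ) * s) / 24) +
          (Real.sqrt (2 * Real.pi * ((N:ℝ) * s / 160)))⁻¹ := by
      refine le_trans (PVV_bound hl11 hl12 _ hK1 hK9) (add_le_add ?_ ?_)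
      · apply mul_le_mul hKle _ (Real.exp_nonneg _) (by nlinarith)
        rw [Real.exp_le_exp]
        linarith
      · apply inv_anti₀ (Real.sqrt_pos.2 (by nlinarith [Real.pi_pos]))
        apply Real.sqrt_le_sqrt
        nlinarith [Real.pi_pos]
    have hP2le : PVV (((Mfl N x.2 s : ℤ) : ℝ) * r / ((N : ℝ) * s))
        (((Mfl N y.2 s : ℤ) : ℝ) * r / ((N : ℝ) * s)) 0 ≤ 1 := PVV_le_one hl21 hl22
    have hP2nn : 0 ≤ PVV (((Mfl N x.2 s : ℤ) : ℝ) * r / ((N : ℝ) * s))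
        (((Mfl N y.2 s : ℤ) : ℝ) * r / ((N : ℝ) * s)) 0 := PVV_nonneg hl21 hl22
    have hP1nn : 0 ≤ PVV (((Mfl N x.1 s : ℤ) : ℝ) * r / ((N : ℝ) * s))
        (((Mfl N y.1 s : ℤ) : ℝ) * r / ((N : ℝ) * s)) 0 := PVV_nonneg hl11 hl12
    rw [Real.norm_eq_abs, abs_of_nonneg (mul_nonneg hP1nn hP2nn)]
    calc PVV (((Mfl N x.1 s : ℤ) : ℝ) * r / ((N : ℝ) * s))
          (((Mfl N y.1 s : ℤ) : ℝ) * r / ((N : ℝ) * s)) 0 *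
        PVV (((Mfl N x.2 s : ℤ) : ℝ) * r / ((N : ℝ) * s))
          (((Mfl N y.2 s : ℤ) : ℝ) * r / ((N : ℝ) * s)) 0
        ≤ PVV (((Mfl N x.1 s : ℤ) : ℝ) * r / ((N : ℝ) * s))
            (((Mfl N y.1 s : ℤ) : ℝ) * r / ((N : ℝ) * s)) 0 * 1 :=
          mul_le_mul_of_nonneg_left hP2le hP1nn
      _ = PVV (((Mfl N x.1 s : ℤ) : ℝ) * r / ((N : ℝ) * s))
            (((Mfl N y.1 s : ℤ) : ℝ) * r / ((N : ℝ) * s)) 0 := mul_one _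
      _ ≤ _ := hP1
  have hba : |((N:ℝ) * s) - ((N:ℝ) * s * (1 - (N:ℝ) ^ (-(1 / 2 + η))))|
      = (N:ℝ) * s * ((N:ℝ) ^ (-(1 / 2 + η))) := by
    rw [abs_of_nonneg (by nlinarith)]
    ring
  refine le_trans key ?_
  rw [hba, add_mul]
  apply add_le_add
  · nlinarith [Real.exp_nonneg (-((N:ℝ) * s) / 24), sq_nonneg ((N:ℝ) * s),
      mul_nonneg (mul_nonneg (sq_nonneg ((N:ℝ) * s)) (Real.exp_nonneg (-((N:ℝ) * s) / 24)))
        (by linarith : (0:ℝ) ≤ 1 - (N:ℝ) ^ (-(1 / 2 + η))),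
      mul_nonneg (mul_nonneg (sq_nonneg ((N:ℝ) * s)) (Real.exp_nonneg (-((N:ℝ) * s) / 24))) hε0]
  · have hsplit : Real.sqrt (2 * Real.pi * ((N:ℝ) * s / 160)) =
        Real.sqrt (2 * Real.pi * s / 160) * Real.sqrt N := by
      rw [← Real.sqrt_mul (by positivity)]
      congr 1
      ring
    have hrpowid : ((N:ℝ) ^ ((1:ℝ)/2))⁻¹ * ((N:ℝ) * (N:ℝ) ^ (-(1 / 2 + η))) = (N:ℝ) ^ (-η) := by
      rw [← Real.rpow_neg (Nat.cast_nonneg N), show ((N:ℝ) * (N:ℝ) ^ (-(1 / 2 + η)))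
          = (N:ℝ) ^ (1 + -(1 / 2 + η)) by
        rw [Real.rpow_add hN0, Real.rpow_one],
        ← Real.rpow_add hN0]
      congr 1
      ring
    have hsq : Real.sqrt (N:ℝ) = (N:ℝ) ^ ((1:ℝ)/2) := by
      rw [Real.sqrt_eq_rpow]
    rw [hsplit, mul_inv, hsq]
    apply le_of_eq
    calc (Real.sqrt (2 * Real.pi * s / 160))⁻¹ * (((N:ℝ) ^ ((1:ℝ)/2))⁻¹) *
          ((N:ℝ) * s * ((N:ℝ) ^ (-(1 / 2 + η))))
        = ((Real.sqrt (2 * Real.pi * s / 160))⁻¹ * s) *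
          (((N:ℝ) ^ ((1:ℝ)/2))⁻¹ * ((N:ℝ) * (N:ℝ) ^ (-(1 / 2 + η)))) := by ring
      _ = c2 * (N:ℝ) ^ (-η) := by rw [hrpowid, hc2]
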